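/- (Full Procrustes distance formula.) Let p, k ≥ 1 and let X₁, X₂ be real p×k matrices that are scaled to unit centroid size, i.e. trace(X₁ᵀX₁) = 1 and trace(X₂ᵀX₂) = 1. Suppose X₂ᵀ X₁ = U D Vᵀ where U and V are k×k orthogonal matrices and D is a diagonal k×k matrix with nonnegative diagonal entries λ₁,…,λ_k. Then 1 − (Σ_{j=1}^k λ_j)² is the minimum over all scalars β ∈ ℝ and all k×k orthogonal matrices Γ of trace((X₂ − β X₁Γ)ᵀ (X₂ − β X₁Γ)), and the minimum is attained at β = Σ_{j=1}^k λ_j and Γ = V Uᵀ; hence the full Procrustes distance satisfies d_F(X₁,X₂) = √(1 − (Σ_{j=1}^k λ_j)²). -/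

import Mathlib

open Matrix

private lemma orth_sq {k : ℕ} {A : Matrix (Fin k) (Fin k) ℝ} (h : Aᵀ * A = 1) :
    A * Aᵀ = 1 := mul_eq_one_comm.mp h

private lemma trace_expand {p k : ℕ} (X₁ X₂ : Matrix (Fin p) (Fin k) ℝ)
    (hX₁ : (X₁ᵀ * X₁).trace = 1) (hX₂ : (X₂ᵀ * X₂).trace = 1)
    (β : ℝ) (Γ : Matrix (Fin k) (Fin k) ℝ) (hΓ : Γᵀ * Γ = 1) :
    ((X₂ - β • (X₁ * Γ))ᵀ * (X₂ - β • (X₁ * Γ))).trace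
      = 1 - 2 * β * (X₂ᵀ * (X₁ * Γ)).trace + β ^ 2 := by
  have hΓΓ : Γ * Γᵀ = 1 := orth_sq hΓ
  have h1 : ((X₁ * Γ)ᵀ * (X₁ * Γ)).trace = 1 := by
    rw [transpose_mul, Matrix.mul_assoc, trace_mul_comm]
    rw [show (X₁ᵀ * (X₁ * Γ)) * Γᵀ = X₁ᵀ * X₁ * (Γ * Γᵀ) by
      simp [Matrix.mul_assoc]]
    simp [hΓΓ, hX₁]
  have h2 : ((X₁ * Γ)ᵀ * X₂).trace = (X₂ᵀ * (X₁ * Γ)).trace := by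
    rw [← trace_transpose ((X₁ * Γ)ᵀ * X₂), transpose_mul, transpose_transpose]
  have hexp : (X₂ - β • (X₁ * Γ))ᵀ * (X₂ - β • (X₁ * Γ))
      = X₂ᵀ * X₂ - β • ((X₁ * Γ)ᵀ * X₂) - β • (X₂ᵀ * (X₁ * Γ))
        + (β * β) • ((X₁ * Γ)ᵀ * (X₁ * Γ)) := by
    simp only [transpose_sub, transpose_smul, Matrix.sub_mul, Matrix.mul_sub,
      Matrix.smul_mul, Matrix.mul_smul, transpose_mul, Matrix.mul_assoc]
    module
  rw [hexp]
  simp only [trace_add, trace_sub, trace_smul, h1, h2, hX₂, smul_eq_mul]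
  ring

private lemma trace_D_mul {k : ℕ} {D : Matrix (Fin k) (Fin k) ℝ} (hD : D.IsDiag)
    (M : Matrix (Fin k) (Fin k) ℝ) :
    (D * M).trace = ∑ i, D i i * M i i := by
  rw [trace]
  apply Finset.sum_congr rfl
  intro i _
  rw [diag, Matrix.mul_apply]
  rw [Finset.sum_eq_single i]
  · intro j _ hj; rw [hD (Ne.symm hj), zero_mul]
  · intro h; exact absurd (Finset.mem_univ i) h

theorem stmt18 (p k : ℕ) (hp : 1 ≤ p) (hk : 1 ≤ k)
    (X₁ X₂ : Matrix (Fin p) (Fin k) ℝ) (U D V : Matrix (Fin k) (Fin k) ℝ)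
    (hU : Uᵀ * U = 1) (hV : Vᵀ * V = 1)
    (hD : D.IsDiag) (hDnn : ∀ i, 0 ≤ D i i)
    (hX₁ : (X₁ᵀ * X₁).trace = 1) (hX₂ : (X₂ᵀ * X₂).trace = 1)
    (hSVD : X₂ᵀ * X₁ = U * D * Vᵀ) :
    IsLeast {r : ℝ | ∃ (β : ℝ) (Γ : Matrix (Fin k) (Fin k) ℝ), Γᵀ * Γ = 1 ∧
        r = ((X₂ - β • (X₁ * Γ))ᵀ * (X₂ - β • (X₁ * Γ))).trace}
      (1 - (∑ j, D j j) ^ 2)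
    ∧ ((X₂ - (∑ j, D j j) • (X₁ * (V * Uᵀ)))ᵀ
          * (X₂ - (∑ j, D j j) • (X₁ * (V * Uᵀ)))).trace
        = 1 - (∑ j, D j j) ^ 2 := by
  set lam : ℝ := ∑ j, D j j with hlam
  have hlamnn : 0 ≤ lam := Finset.sum_nonneg fun i _ => hDnn i
  have hUU : U * Uᵀ = 1 := orth_sq hU
  have hVV : V * Vᵀ = 1 := orth_sq hV
  -- the candidate Γ₀
  have hΓ₀ : (V * Uᵀ)ᵀ * (V * Uᵀ) = 1 := by
    rw [transpose_mul, transpose_transpose]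
    rw [show U * Vᵀ * (V * Uᵀ) = U * (Vᵀ * V) * Uᵀ by simp [Matrix.mul_assoc]]
    simp [hV, hUU]
  -- trace at candidate
  have ht₀ : (X₂ᵀ * (X₁ * (V * Uᵀ))).trace = lam := by
    rw [← Matrix.mul_assoc, hSVD]
    rw [show U * D * Vᵀ * (V * Uᵀ) = U * (D * ((Vᵀ * V) * Uᵀ)) by
      simp [Matrix.mul_assoc]]
    rw [hV, Matrix.one_mul, trace_mul_comm]
    rw [show D * Uᵀ * U = D * (Uᵀ * U) by simp [Matrix.mul_assoc]]
    simp [hU, trace, hlam]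
  have hattain : ((X₂ - lam • (X₁ * (V * Uᵀ)))ᵀ
      * (X₂ - lam • (X₁ * (V * Uᵀ)))).trace = 1 - lam ^ 2 := by
    rw [trace_expand X₁ X₂ hX₁ hX₂ lam _ hΓ₀, ht₀]; ring
  refine ⟨⟨⟨lam, V * Uᵀ, hΓ₀, hattain.symm⟩, ?_⟩, hattain⟩
  rintro r ⟨β, Γ, hΓ, rfl⟩
  rw [trace_expand X₁ X₂ hX₁ hX₂ β Γ hΓ]
  set s : ℝ := (X₂ᵀ * (X₁ * Γ)).trace with hs
  -- bound |s| ≤ lam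
  set M : Matrix (Fin k) (Fin k) ℝ := Vᵀ * Γ * U with hM
  have hMorth : Mᵀ * M = 1 := by
    rw [hM, transpose_mul, transpose_mul, transpose_transpose]
    rw [show Uᵀ * (Γᵀ * V) * (Vᵀ * Γ * U)
        = Uᵀ * (Γᵀ * ((V * Vᵀ) * Γ) * U) by simp [Matrix.mul_assoc]]
    rw [hVV, Matrix.one_mul,
      show Uᵀ * (Γᵀ * Γ * U) = Uᵀ * ((Γᵀ * Γ) * U) by simp [Matrix.mul_assoc],
      hΓ, Matrix.one_mul, hU]
  have hMdiag : ∀ i, |M i i| ≤ 1 := by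
    intro i
    have h1 : (Mᵀ * M) i i = 1 := by rw [hMorth]; simp [Matrix.one_apply]
    have h2 : ∑ j, M j i * M j i = 1 := by
      rw [← h1, Matrix.mul_apply]; simp [transpose_apply]
    have h3 : M i i * M i i ≤ 1 := by
      rw [← h2]
      exact Finset.single_le_sum (fun j _ => mul_self_nonneg (M j i))
        (Finset.mem_univ i)
    nlinarith [abs_nonneg (M i i), sq_abs (M i i), abs_le_one_iff_mul_self_le_one.mpr h3]
  have hsval : s = ∑ i, D i i * M i i := by
    rw [hs, ← Matrix.mul_assoc, hSVD]
    rw [show U * D * Vᵀ * Γ = U * (D * (Vᵀ * Γ)) by simp [Matrix.mul_assoc]]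
    rw [trace_mul_comm]
    rw [show D * (Vᵀ * Γ) * U = D * M by rw [hM]; simp [Matrix.mul_assoc]]
    exact trace_D_mul hD M
  have hsbound : |s| ≤ lam := by
    rw [hsval]
    calc |∑ i, D i i * M i i| ≤ ∑ i, |D i i * M i i| :=
          Finset.abs_sum_le_sum_abs _ _
      _ ≤ ∑ i, D i i := by
          apply Finset.sum_le_sum
          intro i _
          rw [abs_mul, abs_of_nonneg (hDnn i)]
          calc D i i * |M i i| ≤ D i i * 1 :=
                mul_le_mul_of_nonneg_left (hMdiag i) (hDnn i)
            _ = D i i := mul_one _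
  have habs := abs_le.mp hsbound
  nlinarith [sq_nonneg (β - s), habs.1, habs.2, sq_nonneg (lam - s), sq_nonneg (lam + s)]
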